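/- With M, I, and v as in the Cramer-type formula (v_i = (-1)^{|{k ∈ I : k < i}|} det(M_{I∖{i}}) for i ∈ I, zero otherwise), if the submatrix M_I has rank d, then v is a nonzero vector with minimal support in ker M, i.e., v is an elementary vector of ker M. -/

import Mathlib

lemma filter_lt_card' {n k : ℕ} (I : Finset (Fin n)) (hI : I.card = k) (j : Fin k) :
    (I.filter (fun x => x < I.orderEmbOfFin hI j)).card = (j : ℕ) := by
  have himg : I.filter (fun x => x < I.orderEmbOfFin hI j)
      = (Finset.Iio j).image (I.orderEmbOfFin hI) := by
    ext x
    simp only [Finset.mem_filter, Finset.mem_image, Finset.mem_Iio]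
    constructor
    · rintro ⟨hx, hlt⟩
      have : x ∈ Set.range (I.orderEmbOfFin hI) := by
        rw [Finset.range_orderEmbOfFin]; exact hx
      obtain ⟨m, rfl⟩ := this
      exact ⟨m, (I.orderEmbOfFin hI).lt_iff_lt.mp hlt, rfl⟩
    · rintro ⟨m, hm, rfl⟩
      exact ⟨Finset.orderEmbOfFin_mem .., (I.orderEmbOfFin hI).lt_iff_lt.mpr hm⟩
  rw [himg, Finset.card_image_of_injective _ (I.orderEmbOfFin hI).injective, Fin.card_Iio]

lemma erase_orderEmbOfFin' {n k : ℕ} (I : Finset (Fin n)) (hI : I.card = k + 1) (j : Fin (k + 1))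
    (h2 : (I.erase (I.orderEmbOfFin hI j)).card = k) (m : Fin k) :
    (I.erase (I.orderEmbOfFin hI j)).orderEmbOfFin h2 m = I.orderEmbOfFin hI (j.succAbove m) := by
  have := Finset.orderEmbOfFin_unique h2
    (f := fun m => I.orderEmbOfFin hI (j.succAbove m))
    (fun m => Finset.mem_erase.mpr ⟨(I.orderEmbOfFin hI).injective.ne (j.succAbove_ne m),
      Finset.orderEmbOfFin_mem ..⟩)
    ((I.orderEmbOfFin hI).strictMono.comp (Fin.strictMono_succAbove j))
  exact (congrFun this m).symm

lemma mulVec_cofactor' {Q : Type*} [CommRing Q] {d : ℕ} (A : Matrix (Fin d) (Fin (d + 1)) Q) :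
    A.mulVec (fun j => (-1) ^ (j : ℕ) * (A.submatrix id j.succAbove).det) = 0 := by
  funext r
  set B : Matrix (Fin (d + 1)) (Fin (d + 1)) Q := Matrix.of (Fin.cons (A r) A) with hB
  have hBsub : ∀ j : Fin (d + 1), B.submatrix Fin.succ j.succAbove
      = A.submatrix id j.succAbove := by
    intro j; ext a b; simp [hB, Fin.cons_succ]; rfl
  have h0 : B.det = 0 :=
    Matrix.det_zero_of_row_eq (Fin.succ_ne_zero r).symm
      (by funext b; simp [hB, Fin.cons_succ]; rfl)
  rw [Matrix.det_succ_row_zero] at h0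
  simp only [hBsub, hB, Matrix.of_apply, Fin.cons_zero] at h0
  simp only [Matrix.mulVec, dotProduct, Pi.zero_apply]
  rw [← h0]
  exact Finset.sum_congr rfl fun j _ => by
    show A r j * ((-1) ^ (j : ℕ) * (A.submatrix id j.succAbove).det) = (-1) ^ (j : ℕ) * A r j * (A.submatrix id j.succAbove).det; ring

/-- The Cramer-type vector associated to `M` and an index set `I`:
`v i = (-1) ^ |{k ∈ I : k < i}| * det M_{I \ {i}}` for `i ∈ I`, and `v i = 0` otherwise. -/
noncomputable def cramerVec {R : Type*} [CommRing R] {d n : ℕ}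
    (M : Matrix (Fin d) (Fin n) R) (I : Finset (Fin n)) : Fin n → R :=
  fun i =>
    if h : i ∈ I ∧ (I.erase i).card = d then
      (-1 : R) ^ (I.filter (fun k => k < i)).card *
        (M.submatrix id (fun k : Fin d => ((I.erase i).orderIsoOfFin h.2 k : Fin n))).det
    else 0

lemma cramerVec_apply' {R : Type*} [CommRing R] {d n : ℕ} (M : Matrix (Fin d) (Fin n) R)
    (I : Finset (Fin n)) (hI : I.card = d + 1) (j : Fin (d + 1)) :
    cramerVec M I (I.orderEmbOfFin hI j) =
      (-1) ^ (j : ℕ) *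
        (M.submatrix id (fun m => I.orderEmbOfFin hI (j.succAbove m))).det := by
  have hmem : I.orderEmbOfFin hI j ∈ I := Finset.orderEmbOfFin_mem ..
  have h2 : (I.erase (I.orderEmbOfFin hI j)).card = d := by
    rw [Finset.card_erase_of_mem hmem, hI]; omega
  rw [cramerVec, dif_pos ⟨hmem, h2⟩]
  congr 1
  · rw [filter_lt_card' I hI j]
  · have he : (fun k : Fin d =>
        ((I.erase (I.orderEmbOfFin hI j)).orderIsoOfFin h2 k : Fin n))
        = fun m => I.orderEmbOfFin hI (j.succAbove m) := by
      funext k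
      rw [Finset.coe_orderIsoOfFin_apply, erase_orderEmbOfFin' I hI j h2 k]
    rw [he]

lemma cramerVec_not_mem' {R : Type*} [CommRing R] {d n : ℕ} (M : Matrix (Fin d) (Fin n) R)
    (I : Finset (Fin n)) {i : Fin n} (hi : i ∉ I) : cramerVec M I i = 0 := by
  rw [cramerVec, dif_neg (fun h => hi h.1)]

/-- `v` is an elementary vector of the subspace `V`: a nonzero vector of `V` with minimal
support among nonzero vectors of `V`. -/
def IsElementary {Q : Type*} [Field Q] {n : ℕ} (V : Submodule Q (Fin n → Q))
    (v : Fin n → Q) : Prop :=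
  v ∈ V ∧ v ≠ 0 ∧
    ∀ x ∈ V, x ≠ 0 → {i | x i ≠ 0} ⊆ {i | v i ≠ 0} → {i | x i ≠ 0} = {i | v i ≠ 0}

theorem cramerVec_elementary {R : Type*} [CommRing R] [IsDomain R] {d n : ℕ}
    (M : Matrix (Fin d) (Fin n) R)
    (hrank : (M.map (algebraMap R (FractionRing R))).rank = d)
    (I : Finset (Fin n)) (hI : I.card = d + 1)
    (hMI : ((M.map (algebraMap R (FractionRing R))).submatrix id
      (fun k : Fin (d + 1) => (I.orderIsoOfFin hI k : Fin n))).rank = d) :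
    IsElementary (LinearMap.ker (M.map (algebraMap R (FractionRing R))).mulVecLin)
      (fun i => algebraMap R (FractionRing R) (cramerVec M I i)) := by
  classical
  set K := FractionRing R with hK
  set φ := algebraMap R K with hφ
  set f : Fin (d + 1) → Fin n := fun j => I.orderEmbOfFin hI j with hf
  set A : Matrix (Fin d) (Fin (d + 1)) K := (M.map φ).submatrix id f with hA
  have hfI : ∀ j, f j ∈ I := fun j => Finset.orderEmbOfFin_mem ..
  have hfinj : Function.Injective f := (I.orderEmbOfFin hI).injective
  have hfsurj : ∀ i ∈ I, ∃ j, f j = i := by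
    intro i hi
    have : i ∈ Set.range (I.orderEmbOfFin hI) := by
      rw [Finset.range_orderEmbOfFin]; exact hi
    exact this
  have hg : (fun k : Fin (d + 1) => ((I.orderIsoOfFin hI k : Fin n))) = f :=
    funext fun k => Finset.coe_orderIsoOfFin_apply ..
  have hMI' : A.rank = d := by rw [hA, ← hg]; exact hMI
  set v' : Fin n → K := fun i => φ (cramerVec M I i) with hv'
  have hv'0 : ∀ i ∉ I, v' i = 0 := fun i hi => by
    show φ (cramerVec M I i) = 0
    rw [cramerVec_not_mem' M I hi, map_zero]
  have hv'f : ∀ j, v' (f j) = (-1) ^ (j : ℕ) * (A.submatrix id j.succAbove).det := by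
    intro j
    show φ (cramerVec M I (I.orderEmbOfFin hI j)) = _
    rw [cramerVec_apply' M I hI j, map_mul, map_pow, map_neg, map_one, RingHom.map_det]
    congr 1
  -- sum over Fin n of functions supported on I equals sum over Fin (d+1) via f
  have hsum : ∀ g : Fin n → K, (∀ i ∉ I, g i = 0) →
      ∑ i, g i = ∑ j : Fin (d + 1), g (f j) := by
    intro g hgz
    have himg : Finset.image f Finset.univ = I := by
      apply Finset.eq_of_subset_of_card_le
      · intro x hx
        obtain ⟨j, _, rfl⟩ := Finset.mem_image.mp hx
        exact hfI j
      · rw [Finset.card_image_of_injective _ hfinj, Finset.card_univ, Fintype.card_fin, hI]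
    rw [← Finset.sum_subset (Finset.subset_univ I) (fun i _ hi => hgz i hi), ← himg,
      Finset.sum_image (fun a _ b _ h => hfinj h)]
  have hcorr : ∀ x : Fin n → K, (∀ i ∉ I, x i = 0) →
      (M.map φ).mulVec x = A.mulVec (x ∘ f) := by
    intro x hx
    funext r
    simp only [Matrix.mulVec, dotProduct, hA, Matrix.submatrix_apply, id_eq,
      Function.comp_apply]
    exact hsum (fun i => (M.map φ) r i * x i) (fun i hi => by
      show (M.map φ) r i * x i = 0
      rw [hx i hi, mul_zero])
  have hvker : A.mulVec (v' ∘ f) = 0 := by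
    rw [show (v' ∘ f) = fun j : Fin (d + 1) => (-1) ^ (j : ℕ) * (A.submatrix id j.succAbove).det from
      funext fun j => hv'f j]
    exact mulVec_cofactor' A
  have hv'mem : v' ∈ LinearMap.ker (M.map φ).mulVecLin := by
    rw [LinearMap.mem_ker, Matrix.mulVecLin_apply, hcorr v' hv'0, hvker]
  -- the kernel of A has dimension 1
  have hfd : Module.finrank K (LinearMap.ker A.mulVecLin) = 1 := by
    have h1 := LinearMap.finrank_range_add_finrank_ker A.mulVecLin
    rw [Module.finrank_fin_fun] at h1
    have h2 : Module.finrank K (LinearMap.range A.mulVecLin) = d := hMI'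
    omega
  obtain ⟨z, hzker, hz0⟩ : ∃ z, z ∈ LinearMap.ker A.mulVecLin ∧ z ≠ 0 := by
    by_contra h
    push_neg at h
    have hbot : LinearMap.ker A.mulVecLin = ⊥ :=
      (Submodule.eq_bot_iff _).mpr fun x hx => by
        by_contra hx0; exact hx0 (h x hx)
    rw [hbot, finrank_bot] at hfd
    exact one_ne_zero hfd.symm
  obtain ⟨j0, hj0⟩ : ∃ j, z j ≠ 0 := Function.ne_iff.mp hz0
  have hspanz : LinearMap.ker A.mulVecLin = Submodule.span K {z} := by
    symm
    apply Submodule.eq_of_le_of_finrank_eq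
    · rw [Submodule.span_le, Set.singleton_subset_iff]; exact hzker
    · rw [finrank_span_singleton hz0, hfd]
  have hdet : (A.submatrix id j0.succAbove).det ≠ 0 := by
    intro hdet0
    obtain ⟨y, hy0, hSy⟩ := Matrix.exists_mulVec_eq_zero_iff.mpr hdet0
    set w : Fin (d + 1) → K := j0.insertNth 0 y with hw
    have hwker : w ∈ LinearMap.ker A.mulVecLin := by
      rw [LinearMap.mem_ker, Matrix.mulVecLin_apply]
      funext r
      simp only [Matrix.mulVec, dotProduct, Pi.zero_apply]
      rw [Fin.sum_univ_succAbove (fun m => A r m * w m) j0]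
      have hsy := congrFun hSy r
      simp only [Matrix.mulVec, dotProduct, Matrix.submatrix_apply, id_eq,
        Pi.zero_apply] at hsy
      simp [hw, Fin.insertNth_apply_same, Fin.insertNth_apply_succAbove, hsy]
    obtain ⟨c, hc⟩ := Submodule.mem_span_singleton.mp (hspanz ▸ hwker)
    have hc0 : c = 0 := by
      have hcz := congrFun hc j0
      simp only [Pi.smul_apply, smul_eq_mul, hw, Fin.insertNth_apply_same] at hcz
      exact (mul_eq_zero.mp hcz).resolve_right hj0
    apply hy0
    funext k
    have := congrFun hc (j0.succAbove k)
    simp only [hc0, Pi.smul_apply, smul_eq_mul, zero_mul, hw,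
      Fin.insertNth_apply_succAbove] at this
    exact this.symm
  have hvj0 : v' (f j0) ≠ 0 := by
    rw [hv'f]
    exact mul_ne_zero (pow_ne_zero _ (neg_ne_zero.mpr one_ne_zero)) hdet
  have hv'ne : v' ≠ 0 := fun h => hvj0 (by rw [h]; rfl)
  have hvfker : (v' ∘ f) ∈ LinearMap.ker A.mulVecLin := by
    rw [LinearMap.mem_ker, Matrix.mulVecLin_apply, hvker]
  have hvfne : (v' ∘ f) ≠ 0 := fun h => hvj0 (congrFun h j0)
  have hspanv : LinearMap.ker A.mulVecLin = Submodule.span K {v' ∘ f} := by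
    symm
    apply Submodule.eq_of_le_of_finrank_eq
    · rw [Submodule.span_le, Set.singleton_subset_iff]; exact hvfker
    · rw [finrank_span_singleton hvfne, hfd]
  refine ⟨hv'mem, hv'ne, ?_⟩
  intro x hx hx0 hsubset
  have hxI : ∀ i ∉ I, x i = 0 := by
    intro i hi
    by_contra h
    exact (hsubset h) (hv'0 i hi)
  have hxker : (x ∘ f) ∈ LinearMap.ker A.mulVecLin := by
    rw [LinearMap.mem_ker, Matrix.mulVecLin_apply, ← hcorr x hxI]
    exact (LinearMap.mem_ker.mp hx : (M.map φ).mulVecLin x = 0)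
  obtain ⟨c, hc⟩ := Submodule.mem_span_singleton.mp (hspanv ▸ hxker)
  have hc0 : c ≠ 0 := by
    rintro rfl
    apply hx0
    funext i
    by_cases hi : i ∈ I
    · obtain ⟨j, rfl⟩ := hfsurj i hi
      have := congrFun hc j
      simpa using this.symm
    · exact hxI i hi
  ext i
  simp only [Set.mem_setOf_eq]
  by_cases hi : i ∈ I
  · obtain ⟨j, rfl⟩ := hfsurj i hi
    have hxv : x (f j) = c * v' (f j) := by
      have := congrFun hc j
      simpa using this.symm
    constructor
    · intro h hv
      exact h (by rw [hxv, hv, mul_zero])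
    · intro hv
      rw [hxv]
      exact mul_ne_zero hc0 hv
  · simp [hxI i hi, hv'0 i hi]
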